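/- arXiv:1207.0578 — 3 statements merged into one kernel-verified Lean document; each statement's English description precedes it below -/
import Mathlib

section
/- If two closed planar segments {u,v} and {s,t} (with u,v,s,t distinct points, no three of them collinear) intersect at a point p interior to both segments, then the four points u, s, v, t are in convex position and form a convex quadrilateral whose diagonals are {u,v} and {s,t}; consequently the four side segments {s,u}, {s,v}, {t,v}, {t,u} pairwise have no common point interior to both segments. -/
noncomputable section
open Real EuclideanGeometry MeasureTheory
open scoped Classical ENNReal

/-- The Euclidean plane. -/
abbrev Plane := EuclideanSpace ℝ (Fin 2)

/-- Cyclic successor of an index (0-indexed version of `i + 1` modulo `n`). -/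
def nxt {n : ℕ} (i : Fin n) : Fin n :=
  ⟨(i.1 + 1) % n, Nat.mod_lt _ (Nat.lt_of_le_of_lt (Nat.zero_le _) i.2)⟩

/-- Cyclic predecessor of an index (0-indexed version of `i - 1` modulo `n`). -/
def prv {n : ℕ} (i : Fin n) : Fin n :=
  ⟨(i.1 + (n - 1)) % n, Nat.mod_lt _ (Nat.lt_of_le_of_lt (Nat.zero_le _) i.2)⟩

/-- Two closed segments `[a,b]` and `[c,d]` intersect: they have a common point
interior to both segments. -/
def segsCross (a b c d : Plane) : Prop :=
  ∃ p : Plane, p ∈ openSegment ℝ a b ∧ p ∈ openSegment ℝ c d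

/-- No three (distinct) points of `V` are collinear. -/
def noThreeCollinear (V : Set Plane) : Prop :=
  ∀ u ∈ V, ∀ v ∈ V, ∀ w ∈ V, u ≠ v → u ≠ w → v ≠ w →
    ¬ Collinear ℝ ({u, v, w} : Set Plane)

/-- The set of (undirected) edges of the Hamiltonian cycle `C(x)` induced by the
permutation `x`. -/
def tourEdges {n : ℕ} (x : Fin n → Plane) : Set (Sym2 Plane) :=
  {e | ∃ i : Fin n, e = Sym2.mk (x i) (x (nxt i))}

/-- The tour `C(x)` is intersection-free: no two of its edges intersect. -/
def intersectionFree {n : ℕ} (x : Fin n → Plane) : Prop :=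
  ∀ i j : Fin n, Sym2.mk (x i) (x (nxt i)) ≠ Sym2.mk (x j) (x (nxt j)) →
    ¬ segsCross (x i) (x (nxt i)) (x j) (x (nxt j))

/-- The inversion (2-opt) operation: reverse the subsequence between positions
`min i j` and `max i j`. -/
def invop {α : Type*} {n : ℕ} (i j : Fin n) (x : Fin n → α) : Fin n → α :=
  fun p =>
    if h : (min i j).1 ≤ p.1 ∧ p.1 ≤ (max i j).1 then
      x ⟨(min i j).1 + (max i j).1 - p.1, by
        obtain ⟨h1, h2⟩ := h
        have := (max i j).2
        omega⟩
    else x p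

/-- The jump operation: move the element in position `i` into position `j`,
shifting the intermediate elements accordingly. -/
def jmp {α : Type*} {n : ℕ} (i j : Fin n) (x : Fin n → α) : Fin n → α :=
  fun p =>
    if i ≤ j then
      if p < i then x p
      else if h : p.1 < j.1 then x ⟨p.1 + 1, by have := j.2; omega⟩
      else if p = j then x i
      else x p
    else
      if p < j then x p
      else if p = j then x i
      else if h : p.1 ≤ i.1 then x ⟨p.1 - 1, by have := p.2; omega⟩
      else x p

/-- The fitness of a permutation: the total Euclidean length of the tour `C(x)`. -/
def fitness {n : ℕ} (x : Fin n → Plane) : ℝ :=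
  ∑ i : Fin n, dist (x i) (x (nxt i))

/-- `x` is a permutation (an enumeration without repetitions) of the point set `V`. -/
def isPermOf {n : ℕ} (x : Fin n → Plane) (V : Set Plane) : Prop :=
  Function.Injective x ∧ Set.range x = V

/-- `x` is an optimal permutation of `V`: it minimizes the fitness among all
permutations of `V`. -/
def IsOptimalPerm {n : ℕ} (V : Set Plane) (x : Fin n → Plane) : Prop :=
  isPermOf x V ∧ ∀ y : Fin n → Plane, isPermOf y V → fitness x ≤ fitness y

/-- `hull(V)`: the set of points of `V` that are vertices of the convex hull of `V`. -/
def hullVertices (V : Set Plane) : Set Plane :=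
  {v | v ∈ V ∧ v ∉ convexHull ℝ (V \ {v})}

/-- `V` is angle-bounded by `ε`: every angle formed by three distinct points of `V`
lies strictly between `ε` and `π - ε`. -/
def angleBounded (ε : ℝ) (V : Set Plane) : Prop :=
  ∀ u ∈ V, ∀ v ∈ V, ∀ w ∈ V, u ≠ v → u ≠ w → v ≠ w →
    ε < ∠ u v w ∧ ∠ u v w < Real.pi - ε

/-- The set of pairwise distances between distinct points of `V`. -/
def pairDists (V : Set Plane) : Set ℝ :=
  {d | ∃ u ∈ V, ∃ v ∈ V, u ≠ v ∧ d = dist u v}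

/-- `γ(ε) = (d_max/d_min - 1) · cos ε / (1 - cos ε)`. -/
def gammaF (ε dmax dmin : ℝ) : ℝ :=
  (dmax / dmin - 1) * (Real.cos ε / (1 - Real.cos ε))

def lfun (s t : Plane) : Plane →ₗ[ℝ] ℝ where
  toFun x := x 0 * (t 1 - s 1) - x 1 * (t 0 - s 0)
  map_add' x y := by simp [PiLp.add_apply]; ring
  map_smul' c x := by simp [PiLp.smul_apply, smul_eq_mul]; ring

lemma lfun_st (s t : Plane) : lfun s t s = lfun s t t := by
  simp [lfun]; ring

lemma lfun_collinear {s t u : Plane} (hst : s ≠ t) (h : lfun s t u = lfun s t s) :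
    Collinear ℝ ({u, s, t} : Set Plane) := by
  have h' : (u 0 - s 0) * (t 1 - s 1) = (u 1 - s 1) * (t 0 - s 0) := by
    simp only [lfun, LinearMap.coe_mk, AddHom.coe_mk] at h
    linear_combination h
  have hne : t 0 ≠ s 0 ∨ t 1 ≠ s 1 := by
    by_contra hc
    push_neg at hc
    exact hst (by ext i; fin_cases i <;> simp [hc.1, hc.2])
  rw [collinear_iff_of_mem (show s ∈ ({u, s, t} : Set Plane) by simp)]
  refine ⟨t - s, ?_⟩
  intro x hx
  simp only [Set.mem_insert_iff, Set.mem_singleton_iff] at hx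
  rcases hx with rfl | rfl | rfl
  · rcases hne with h0 | h1
    · refine ⟨(x 0 - s 0) / (t 0 - s 0), ?_⟩
      have e0 : (x 0 - s 0) / (t 0 - s 0) * (t 0 - s 0) + s 0 = x 0 := by
        rw [div_mul_cancel₀ _ (sub_ne_zero.2 h0)]; ring
      have e1 : (x 0 - s 0) / (t 0 - s 0) * (t 1 - s 1) + s 1 = x 1 := by
        rw [div_mul_eq_mul_div, div_add' _ _ _ (sub_ne_zero.2 h0),
          div_eq_iff (sub_ne_zero.2 h0)]
        linear_combination h'
      ext i
      fin_cases i
      · simp only [vadd_eq_add, PiLp.add_apply, PiLp.smul_apply, PiLp.sub_apply,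
          smul_eq_mul]
        exact e0.symm
      · simp only [vadd_eq_add, PiLp.add_apply, PiLp.smul_apply, PiLp.sub_apply,
          smul_eq_mul]
        exact e1.symm
    · refine ⟨(x 1 - s 1) / (t 1 - s 1), ?_⟩
      have e1 : (x 1 - s 1) / (t 1 - s 1) * (t 1 - s 1) + s 1 = x 1 := by
        rw [div_mul_cancel₀ _ (sub_ne_zero.2 h1)]; ring
      have e0 : (x 1 - s 1) / (t 1 - s 1) * (t 0 - s 0) + s 0 = x 0 := by
        rw [div_mul_eq_mul_div, div_add' _ _ _ (sub_ne_zero.2 h1),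
          div_eq_iff (sub_ne_zero.2 h1)]
        linear_combination -h'
      ext i
      fin_cases i
      · simp only [vadd_eq_add, PiLp.add_apply, PiLp.smul_apply, PiLp.sub_apply,
          smul_eq_mul]
        exact e0.symm
      · simp only [vadd_eq_add, PiLp.add_apply, PiLp.smul_apply, PiLp.sub_apply,
          smul_eq_mul]
        exact e1.symm
  · exact ⟨0, by simp⟩
  · exact ⟨1, by ext i; simp [vadd_eq_add]⟩


lemma seg_eval (ℓ : Plane →ₗ[ℝ] ℝ) {x y q : Plane} (h : q ∈ openSegment ℝ x y) :
    ∃ a b : ℝ, 0 < a ∧ 0 < b ∧ a + b = 1 ∧ ℓ q = a * ℓ x + b * ℓ y := by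
  obtain ⟨a, b, ha, hb, hab, hq⟩ := h
  exact ⟨a, b, ha, hb, hab, by rw [← hq]; simp [smul_eq_mul]⟩

lemma shared_cross {s a b q : Plane} (h1 : q ∈ openSegment ℝ s a)
    (h2 : q ∈ openSegment ℝ s b) : lfun s b a = lfun s b s := by
  obtain ⟨α, β, hα, hβ, hαβ, hq1⟩ := h1
  obtain ⟨α', β', hα', hβ', hαβ', hq2⟩ := h2
  have e : ∀ i : Fin 2, β * (a i - s i) = β' * (b i - s i) := by
    intro i
    have h := congrArg (fun w : Plane => w i) (hq1.trans hq2.symm)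
    simp only [PiLp.add_apply, PiLp.smul_apply, smul_eq_mul] at h
    linear_combination h - s i * hαβ + s i * hαβ'
  have h0 := e 0
  have h1' := e 1
  have key : β * ((a 0 - s 0) * (b 1 - s 1) - (a 1 - s 1) * (b 0 - s 0)) = 0 := by
    linear_combination (b 1 - s 1) * h0 - (b 0 - s 0) * h1'
  have hc : (a 0 - s 0) * (b 1 - s 1) - (a 1 - s 1) * (b 0 - s 0) = 0 := by
    rcases mul_eq_zero.mp key with h | h
    · exact absurd h (ne_of_gt hβ)
    · exact h
  simp only [lfun, LinearMap.coe_mk, AddHom.coe_mk]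
  linear_combination hc

lemma no_cross_opp (ℓ : Plane →ₗ[ℝ] ℝ) {x y x' y' : Plane} (hx : ℓ x = ℓ x')
    (hprod : (ℓ y - ℓ x) * (ℓ y' - ℓ x) < 0) : ¬ segsCross x y x' y' := by
  rintro ⟨q, h1, h2⟩
  obtain ⟨a, b, ha, hb, hab, e1⟩ := seg_eval ℓ h1
  obtain ⟨a', b', ha', hb', hab', e2⟩ := seg_eval ℓ h2
  have d1 : ℓ q - ℓ x = b * (ℓ y - ℓ x) := by linear_combination e1 + ℓ x * hab
  have d2 : ℓ q - ℓ x = b' * (ℓ y' - ℓ x) := by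
    linear_combination e2 + ℓ x * hab' - a' * hx
  have sq : (ℓ q - ℓ x) * (ℓ q - ℓ x) = (b * b') * ((ℓ y - ℓ x) * (ℓ y' - ℓ x)) := by
    nth_rewrite 1 [d1]
    nth_rewrite 1 [d2]
    ring
  have hneg : (ℓ q - ℓ x) * (ℓ q - ℓ x) < 0 := by
    rw [sq]; exact mul_neg_of_pos_of_neg (mul_pos hb hb') hprod
  linarith [mul_self_nonneg (ℓ q - ℓ x)]

lemma excl3 {ℓ : Plane →ₗ[ℝ] ℝ} {p q r z : Plane} {c : ℝ}
    (hp : c ≤ ℓ p) (hq : c ≤ ℓ q) (hr : c ≤ ℓ r) (hz : ℓ z < c) :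
    z ∉ convexHull ℝ ({p, q, r} : Set Plane) := by
  intro h
  have hsub : ({p, q, r} : Set Plane) ⊆ {x | c ≤ ℓ x} := by
    intro x hx
    simp only [Set.mem_insert_iff, Set.mem_singleton_iff] at hx
    rcases hx with rfl | rfl | rfl <;> assumption
  exact absurd (convexHull_min hsub (convex_halfSpace_ge ℓ.isLinear c) h)
    (not_le.2 hz)

lemma excl3' {ℓ : Plane →ₗ[ℝ] ℝ} {p q r z : Plane} {c : ℝ}
    (hp : ℓ p = c) (hq : ℓ q = c) (hsign : (ℓ r - c) * (ℓ z - c) < 0) :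
    z ∉ convexHull ℝ ({p, q, r} : Set Plane) := by
  rcases mul_neg_iff.mp hsign with ⟨h1, h2⟩ | ⟨h1, h2⟩
  · exact excl3 hp.ge hq.ge (by linarith) (by linarith)
  · have := excl3 (ℓ := -ℓ) (c := -c) (p := p) (q := q) (r := r) (z := z)
    simp only [LinearMap.neg_apply] at this
    exact this (by linarith) (by linarith) (by linarith) (by linarith)

/-- two segments crossing at a point interior to both form the
diagonals of a convex quadrilateral `u, s, v, t`; in particular the four points
are in convex position and the four side segments pairwise do not intersect. -/
theorem stmt0 (u v s t p : Plane)
    (hdistinct : List.Pairwise (· ≠ ·) [u, v, s, t])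
    (hcol : noThreeCollinear ({u, v, s, t} : Set Plane))
    (hp1 : p ∈ openSegment ℝ u v) (hp2 : p ∈ openSegment ℝ s t) :
    (∀ z ∈ ({u, s, v, t} : Set Plane),
        z ∉ convexHull ℝ (({u, s, v, t} : Set Plane) \ {z})) ∧
    List.Pairwise (fun e₁ e₂ : Plane × Plane => ¬ segsCross e₁.1 e₁.2 e₂.1 e₂.2)
      [(s, u), (s, v), (t, v), (t, u)] := by
  simp only [List.pairwise_cons, List.mem_cons, List.not_mem_nil, or_false,
    List.Pairwise.nil, and_true] at hdistinct
  obtain ⟨h1, h2, h3, -⟩ := hdistinct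
  have huv : u ≠ v := h1 v (Or.inl rfl)
  have hus : u ≠ s := h1 s (Or.inr (Or.inl rfl))
  have hut : u ≠ t := h1 t (Or.inr (Or.inr rfl))
  have hvs : v ≠ s := h2 s (Or.inl rfl)
  have hvt : v ≠ t := h2 t (Or.inr rfl)
  have hst : s ≠ t := h3 t rfl
  have memu : u ∈ ({u, v, s, t} : Set Plane) := by simp
  have memv : v ∈ ({u, v, s, t} : Set Plane) := by simp
  have mems : s ∈ ({u, v, s, t} : Set Plane) := by simp
  have memt : t ∈ ({u, v, s, t} : Set Plane) := by simp
  set L := lfun s t with hL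
  set M := lfun u v with hM
  have hLst : L s = L t := lfun_st s t
  have hMuv : M u = M v := lfun_st u v
  have hLu : L u ≠ L s := fun h =>
    hcol u memu s mems t memt hus hut hst (lfun_collinear hst h)
  have hLv : L v ≠ L s := fun h =>
    hcol v memv s mems t memt hvs hvt hst (lfun_collinear hst h)
  have hMs : M s ≠ M u := fun h =>
    hcol s mems u memu v memv hus.symm hvs.symm huv (lfun_collinear huv h)
  have hMt : M t ≠ M u := fun h =>
    hcol t memt u memu v memv hut.symm hvt.symm huv (lfun_collinear huv h)
  -- the two products of signed distances are negative
  have hLprod : (L u - L s) * (L v - L s) < 0 := by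
    obtain ⟨a, b, ha, hb, hab, e1⟩ := seg_eval L hp1
    obtain ⟨a', b', ha', hb', hab', e2⟩ := seg_eval L hp2
    have hps : L p = L s := by linear_combination e2 + L s * hab' - b' * hLst
    have hsum : a * (L u - L s) + b * (L v - L s) = 0 := by
      linear_combination hps - e1 - L s * hab
    have hh : b * (L v - L s) = a * (L s - L u) := by linear_combination hsum
    rcases hLu.lt_or_gt with h | h
    · have h2 : 0 < b * (L v - L s) := by
        rw [hh]; exact mul_pos ha (by linarith)
      have h3 : 0 < L v - L s := by
        rcases mul_pos_iff.mp h2 with ⟨-, h4⟩ | ⟨h4, -⟩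
        · exact h4
        · exact absurd h4 (not_lt.2 hb.le)
      exact mul_neg_of_neg_of_pos (by linarith) h3
    · have h2 : b * (L v - L s) < 0 := by
        rw [hh]; exact mul_neg_of_pos_of_neg ha (by linarith)
      have h3 : L v - L s < 0 := by
        rcases mul_neg_iff.mp h2 with ⟨-, h4⟩ | ⟨h4, -⟩
        · exact h4
        · exact absurd h4 (not_lt.2 hb.le)
      exact mul_neg_of_pos_of_neg (by linarith) h3
  have hMprod : (M s - M u) * (M t - M u) < 0 := by
    obtain ⟨a, b, ha, hb, hab, e1⟩ := seg_eval M hp2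
    obtain ⟨a', b', ha', hb', hab', e2⟩ := seg_eval M hp1
    have hpu : M p = M u := by linear_combination e2 + M u * hab' - b' * hMuv
    have hsum : a * (M s - M u) + b * (M t - M u) = 0 := by
      linear_combination hpu - e1 - M u * hab
    have hh : b * (M t - M u) = a * (M u - M s) := by linear_combination hsum
    rcases hMs.lt_or_gt with h | h
    · have h2 : 0 < b * (M t - M u) := by
        rw [hh]; exact mul_pos ha (by linarith)
      have h3 : 0 < M t - M u := by
        rcases mul_pos_iff.mp h2 with ⟨-, h4⟩ | ⟨h4, -⟩
        · exact h4
        · exact absurd h4 (not_lt.2 hb.le)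
      exact mul_neg_of_neg_of_pos (by linarith) h3
    · have h2 : b * (M t - M u) < 0 := by
        rw [hh]; exact mul_neg_of_pos_of_neg ha (by linarith)
      have h3 : M t - M u < 0 := by
        rcases mul_neg_iff.mp h2 with ⟨-, h4⟩ | ⟨h4, -⟩
        · exact h4
        · exact absurd h4 (not_lt.2 hb.le)
      exact mul_neg_of_pos_of_neg (by linarith) h3
  constructor
  · -- convex position
    intro z hz
    have hz' : z = u ∨ z = s ∨ z = v ∨ z = t := by simpa using hz
    rcases hz' with rfl | rfl | rfl | rfl
    · intro hmem
      have hsub : ({z, s, v, t} : Set Plane) \ {z} ⊆ ({s, t, v} : Set Plane) := by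
        intro x hx
        obtain ⟨hx1, hx2⟩ := hx
        simp only [Set.mem_insert_iff, Set.mem_singleton_iff] at hx1 hx2 ⊢
        tauto
      exact excl3' rfl hLst.symm (by rw [mul_comm] at hLprod; exact hLprod)
        (convexHull_mono hsub hmem)
    · intro hmem
      have hsub : ({u, z, v, t} : Set Plane) \ {z} ⊆ ({u, v, t} : Set Plane) := by
        intro x hx
        obtain ⟨hx1, hx2⟩ := hx
        simp only [Set.mem_insert_iff, Set.mem_singleton_iff] at hx1 hx2 ⊢
        tauto
      exact excl3' rfl hMuv.symm (by rw [mul_comm] at hMprod; exact hMprod)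
        (convexHull_mono hsub hmem)
    · intro hmem
      have hsub : ({u, s, z, t} : Set Plane) \ {z} ⊆ ({s, t, u} : Set Plane) := by
        intro x hx
        obtain ⟨hx1, hx2⟩ := hx
        simp only [Set.mem_insert_iff, Set.mem_singleton_iff] at hx1 hx2 ⊢
        tauto
      exact excl3' rfl hLst.symm hLprod (convexHull_mono hsub hmem)
    · intro hmem
      have hsub : ({u, s, v, z} : Set Plane) \ {z} ⊆ ({u, v, s} : Set Plane) := by
        intro x hx
        obtain ⟨hx1, hx2⟩ := hx
        simp only [Set.mem_insert_iff, Set.mem_singleton_iff] at hx1 hx2 ⊢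
        tauto
      exact excl3' rfl hMuv.symm hMprod (convexHull_mono hsub hmem)
  · -- the four sides pairwise do not cross
    refine List.Pairwise.cons ?_ (List.Pairwise.cons ?_ (List.Pairwise.cons ?_
      (List.pairwise_singleton _ _)))
    · intro e he
      simp only [List.mem_cons, List.not_mem_nil, or_false] at he
      rcases he with rfl | rfl | rfl
      · -- (s,u) vs (s,v)
        rintro ⟨q, h1, h2⟩
        exact hcol u memu s mems v memv hus huv hvs.symm
          (lfun_collinear hvs.symm (shared_cross h1 h2))
      · -- (s,u) vs (t,v)
        exact no_cross_opp L hLst hLprod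
      · -- (s,u) vs (t,u)
        rintro ⟨q, h1, h2⟩
        rw [openSegment_symm] at h1 h2
        exact hcol s mems u memu t memt hus.symm hst hut
          (lfun_collinear hut (shared_cross h1 h2))
    · intro e he
      simp only [List.mem_cons, List.not_mem_nil, or_false] at he
      rcases he with rfl | rfl
      · -- (s,v) vs (t,v)
        rintro ⟨q, h1, h2⟩
        rw [openSegment_symm] at h1 h2
        exact hcol s mems v memv t memt hvs.symm hst hvt
          (lfun_collinear hvt (shared_cross h1 h2))
      · -- (s,v) vs (t,u)
        exact no_cross_opp L hLst
          (by rw [mul_comm] at hLprod; exact hLprod)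
    · intro e he
      simp only [List.mem_cons, List.not_mem_nil, or_false] at he
      rcases he with rfl
      -- (t,v) vs (t,u)
      rintro ⟨q, h1, h2⟩
      exact hcol v memv t memt u memu hvt huv.symm hut.symm
        (lfun_collinear hut.symm (shared_cross h1 h2))

end
end

section
/- Let V be a set of n planar points, no three collinear, angle-bounded by ε, and let x be a permutation of V whose tour C(x) contains intersecting edges {x_{i−1},x_i} and {x_j,x_{j+1}} (1 ≤ i < j ≤ n). Let y = inv_{i,j}[x] be the inversion replacing these two intersecting edges by the two non-intersecting edges {x_{i−1},x_j} and {x_i,x_{j+1}}. Then f(x) − f(y) > 2·d_min·(1 − cos ε)/cos ε, where d_min is the minimum Euclidean distance between any two points of V. -/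
noncomputable section
open Real EuclideanGeometry MeasureTheory
open scoped Classical ENNReal

open scoped RealInnerProductSpace

lemma angle_left_of_mem {a b p : Plane} (h : p ∈ openSegment ℝ a b) (c : Plane) :
    ∠ p a c = ∠ b a c := by
  rw [openSegment_eq_image'] at h
  obtain ⟨t, ht, rfl⟩ := h
  show InnerProductGeometry.angle _ _ = InnerProductGeometry.angle _ _
  have h1 : (a + t • (b - a)) -ᵥ a = t • (b -ᵥ a) := by
    simp [vsub_eq_sub]
  rw [h1, InnerProductGeometry.angle_smul_left_of_pos _ _ ht.1]

lemma angle_right_of_mem {a b p : Plane} (h : p ∈ openSegment ℝ a b) (c : Plane) :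
    ∠ p b c = ∠ a b c := by
  rw [openSegment_eq_image'] at h
  obtain ⟨t, ht, rfl⟩ := h
  show InnerProductGeometry.angle _ _ = InnerProductGeometry.angle _ _
  have h1 : (a + t • (b - a)) -ᵥ b = (1 - t) • (a -ᵥ b) := by
    simp only [vsub_eq_sub, smul_sub, sub_smul, one_smul]
    module
  rw [h1, InnerProductGeometry.angle_smul_left_of_pos _ _ (by linarith [ht.2])]

lemma proj_formula {p a c : Plane} (hpa : p ≠ a) (hpc : p ≠ c) (hac : a ≠ c) :
    dist a c = dist a p * Real.cos (∠ p a c) + dist c p * Real.cos (∠ p c a) := by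
  have hpa' : ‖p - a‖ ≠ 0 := by simpa [sub_eq_zero] using hpa
  have hac' : ‖c - a‖ ≠ 0 := by
    simpa [sub_eq_zero] using (Ne.symm hac)
  have h1 : Real.cos (∠ p a c) = ⟪p - a, c - a⟫ / (‖p - a‖ * ‖c - a‖) := by
    rw [EuclideanGeometry.angle, InnerProductGeometry.cos_angle]
    simp only [vsub_eq_sub]
  have h2 : Real.cos (∠ p c a) = ⟪p - c, a - c⟫ / (‖p - c‖ * ‖a - c‖) := by
    rw [EuclideanGeometry.angle, InnerProductGeometry.cos_angle]
    simp only [vsub_eq_sub]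
  have hd1 : dist a p = ‖p - a‖ := by rw [dist_eq_norm, norm_sub_rev]
  have hd2 : dist c p = ‖p - c‖ := by rw [dist_eq_norm, norm_sub_rev]
  have hd3 : dist a c = ‖c - a‖ := by rw [dist_eq_norm, norm_sub_rev]
  have hinner : ⟪p - a, c - a⟫ + ⟪p - c, a - c⟫ = ‖c - a‖ ^ 2 := by
    have : ⟪p - c, a - c⟫ = ⟪c - p, c - a⟫ := by
      rw [show a - c = -(c - a) by abel, show p - c = -(c - p) by abel,
        inner_neg_neg]
    rw [this, ← inner_add_left, show p - a + (c - p) = c - a by abel,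
      real_inner_self_eq_norm_sq]
  have hnorm : ‖a - c‖ = ‖c - a‖ := norm_sub_rev _ _
  have hpc' : ‖p - c‖ ≠ 0 := by simpa [sub_eq_zero] using hpc
  rw [h1, h2, hd1, hd2, hd3, hnorm]
  set A := ‖p - a‖ with hA
  set B := ‖p - c‖ with hB
  set C := ‖c - a‖ with hC
  set K1 : ℝ := ⟪p - a, c - a⟫ with hK1
  set K2 : ℝ := ⟪p - c, a - c⟫ with hK2
  field_simp
  linear_combination (-1 : ℝ) * hinner

lemma cross_gain {a b c d : Plane} {ε dmin : ℝ}
    (hab : a ≠ b) (hcd : c ≠ d) (hac : a ≠ c) (hbd : b ≠ d)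
    (hcross : segsCross a b c d)
    (h1 : ε < ∠ b a c) (h2 : ε < ∠ d c a) (h3 : ε < ∠ a b d) (h4 : ε < ∠ c d b)
    (hε0 : 0 < ε) (hεπ : ε < π / 2)
    (hm1 : dmin ≤ dist a c) (hm2 : dmin ≤ dist b d) :
    dist a b + dist c d - (dist a c + dist b d) > 2 * dmin * (1 - Real.cos ε) / Real.cos ε := by
  obtain ⟨p, hp1, hp2⟩ := hcross
  have hpa : p ≠ a := fun h => hab (left_mem_openSegment_iff.1 (h ▸ hp1))
  have hpb : p ≠ b := fun h => hab (right_mem_openSegment_iff.1 (h ▸ hp1))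
  have hpc : p ≠ c := fun h => hcd (left_mem_openSegment_iff.1 (h ▸ hp2))
  have hpd : p ≠ d := fun h => hcd (right_mem_openSegment_iff.1 (h ▸ hp2))
  have hAB : dist a p + dist p b = dist a b :=
    dist_add_dist_of_mem_segment (openSegment_subset_segment ℝ a b hp1)
  have hCD : dist c p + dist p d = dist c d :=
    dist_add_dist_of_mem_segment (openSegment_subset_segment ℝ c d hp2)
  have hAC : dist a c = dist a p * Real.cos (∠ b a c) + dist c p * Real.cos (∠ d c a) := by
    rw [← angle_left_of_mem hp1 c, ← angle_left_of_mem hp2 a]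
    exact proj_formula hpa hpc hac
  have hBD : dist b d = dist b p * Real.cos (∠ a b d) + dist d p * Real.cos (∠ c d b) := by
    rw [← angle_right_of_mem hp1 d, ← angle_right_of_mem hp2 b]
    exact proj_formula hpb hpd hbd
  -- cos bounds
  have hεIcc : ε ∈ Set.Icc 0 π := ⟨hε0.le, by linarith [Real.pi_pos]⟩
  have cosb : ∀ θ : ℝ, ε < θ → θ ≤ π → Real.cos θ < Real.cos ε := fun θ hθ hθπ =>
    Real.strictAntiOn_cos hεIcc ⟨by linarith, hθπ⟩ hθ
  have c1 : Real.cos (∠ b a c) < Real.cos ε := cosb _ h1 (EuclideanGeometry.angle_le_pi _ _ _)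
  have c2 : Real.cos (∠ d c a) < Real.cos ε := cosb _ h2 (EuclideanGeometry.angle_le_pi _ _ _)
  have c3 : Real.cos (∠ a b d) < Real.cos ε := cosb _ h3 (EuclideanGeometry.angle_le_pi _ _ _)
  have c4 : Real.cos (∠ c d b) < Real.cos ε := cosb _ h4 (EuclideanGeometry.angle_le_pi _ _ _)
  have hcos0 : 0 < Real.cos ε := Real.cos_pos_of_mem_Ioo ⟨by linarith [Real.pi_pos], hεπ⟩
  have hcos1 : Real.cos ε < 1 := by
    calc Real.cos ε < Real.cos 0 := Real.strictAntiOn_cos ⟨le_refl 0, Real.pi_pos.le⟩ hεIcc hε0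
    _ = 1 := Real.cos_zero
  have dap : 0 < dist a p := dist_pos.2 (Ne.symm hpa)
  have dpb : 0 < dist p b := dist_pos.2 hpb
  have dcp : 0 < dist c p := dist_pos.2 (Ne.symm hpc)
  have dpd : 0 < dist p d := dist_pos.2 hpd
  have hdb : dist b p = dist p b := dist_comm _ _
  have hdd : dist d p = dist p d := dist_comm _ _
  rw [hdb, hdd] at hBD
  -- dist a c < (dist a p + dist c p) * cos ε
  have kAC : dist a c < (dist a p + dist c p) * Real.cos ε := by
    rw [hAC]; nlinarith
  have kBD : dist b d < (dist p b + dist p d) * Real.cos ε := by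
    rw [hBD]; nlinarith
  -- gain bound
  have gain : dist a b + dist c d - (dist a c + dist b d)
      > (1 - Real.cos ε) * (dist a b + dist c d) := by
    rw [← hAB, ← hCD, hAC, hBD]; nlinarith
  have sumBig : dist a b + dist c d > 2 * dmin / Real.cos ε := by
    have s1 : dist a p + dist c p > dmin / Real.cos ε := by
      rw [gt_iff_lt, div_lt_iff₀ hcos0]; linarith
    have s2 : dist p b + dist p d > dmin / Real.cos ε := by
      rw [gt_iff_lt, div_lt_iff₀ hcos0]; linarith
    have : 2 * dmin / Real.cos ε = dmin / Real.cos ε + dmin / Real.cos ε := by ring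
    linarith
  calc 2 * dmin * (1 - Real.cos ε) / Real.cos ε
      = (1 - Real.cos ε) * (2 * dmin / Real.cos ε) := by ring
    _ < (1 - Real.cos ε) * (dist a b + dist c d) := by
        apply mul_lt_mul_of_pos_left sumBig (by linarith)
    _ < dist a b + dist c d - (dist a c + dist b d) := gain

lemma collinear_of_cross_shared {a b c : Plane} (h : segsCross a b c a) :
    Collinear ℝ ({a, b, c} : Set Plane) := by
  obtain ⟨p, hp1, hp2⟩ := h
  rw [openSegment_eq_image'] at hp1 hp2
  obtain ⟨t, ht, hpt⟩ := hp1
  obtain ⟨s, hs, hps⟩ := hp2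
  have hs1 : (1 : ℝ) - s ≠ 0 := by have := hs.2; intro h; nlinarith
  have heq : a + t • (b - a) = c + s • (a - c) := by
    simp only at hpt hps; rw [hpt, hps]
  have h0 : t • (b - a) - (1 - s) • (c - a) = 0 := by
    rw [show t • (b - a) - (1 - s) • (c - a) = (a + t • (b - a)) - (c + s • (a - c)) from by
      module, heq, sub_self]
  have hv : (1 - s) • (c - a) = t • (b - a) := (sub_eq_zero.1 h0).symm
  have hc : c - a = ((1 - s)⁻¹ * t) • (b - a) := by
    rw [mul_smul, ← hv, smul_smul, inv_mul_cancel₀ hs1, one_smul]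
  rw [collinear_iff_of_mem (Set.mem_insert a {b, c})]
  refine ⟨b - a, ?_⟩
  rintro q (rfl | rfl | rfl)
  · exact ⟨0, by simp⟩
  · refine ⟨1, ?_⟩
    simp only [vadd_eq_add, one_smul]
    abel
  · exact ⟨(1 - s)⁻¹ * t, by rw [← hc]; simp [vadd_eq_add]⟩

lemma prv_val_zero {n : ℕ} (k : Fin n) (h : k.1 = 0) : (prv k).1 = n - 1 := by
  have hn : 0 < n := k.pos
  simp only [prv, h, zero_add]
  exact Nat.mod_eq_of_lt (by omega)

lemma prv_val_pos {n : ℕ} (k : Fin n) (h : k.1 ≠ 0) : (prv k).1 = k.1 - 1 := by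
  have hk := k.2
  simp only [prv]
  have h2 : k.1 + (n - 1) = (k.1 - 1) + n := by omega
  rw [h2, Nat.add_mod_right, Nat.mod_eq_of_lt (by omega)]

lemma nxt_val_lt {n : ℕ} (k : Fin n) (h : k.1 + 1 < n) : (nxt k).1 = k.1 + 1 := by
  simp only [nxt]; exact Nat.mod_eq_of_lt h

lemma nxt_val_last {n : ℕ} (k : Fin n) (h : k.1 + 1 = n) : (nxt k).1 = 0 := by
  simp only [nxt]; rw [h, Nat.mod_self]

lemma nxt_prv {n : ℕ} (k : Fin n) : nxt (prv k) = k := by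
  have hn : 0 < n := k.pos
  have hk := k.2
  apply Fin.ext
  by_cases h : k.1 = 0
  · rw [nxt_val_last (prv k) (by rw [prv_val_zero k h]; omega), h]
  · rw [nxt_val_lt (prv k) (by rw [prv_val_pos k h]; omega), prv_val_pos k h]
    omega

def rmap {n : ℕ} (i j : Fin n) (k : Fin n) : Fin n :=
  if h : i.1 ≤ k.1 ∧ k.1 < j.1 then ⟨i.1 + j.1 - 1 - k.1, by have := j.2; omega⟩ else k

lemma rmap_val {n : ℕ} {i j k : Fin n} (h : i.1 ≤ k.1 ∧ k.1 < j.1) :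
    (rmap i j k).1 = i.1 + j.1 - 1 - k.1 := by
  simp only [rmap, dif_pos h]

lemma fitness_diff {n : ℕ} (x : Fin n → Plane) (i j : Fin n) (hij : i < j)
    (hnot : ¬(i.1 = 0 ∧ j.1 = n - 1)) :
    fitness x - fitness (invop i j x) =
      dist (x (prv i)) (x i) + dist (x j) (x (nxt j))
        - dist (x (prv i)) (x j) - dist (x i) (x (nxt j)) := by
  have hjn := j.2
  have hijv : i.1 < j.1 := hij
  have hn2 : 2 ≤ n := by omega
  set y := invop i j x with hy
  have hm : min i j = i := min_eq_left hij.le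
  have hM : max i j = j := max_eq_right hij.le
  have hy_in : ∀ p q : Fin n, i.1 ≤ p.1 → p.1 ≤ j.1 → q.1 = i.1 + j.1 - p.1 →
      y p = x q := by
    intro p q h1 h2 hq
    simp only [hy, invop, hm, hM]
    rw [dif_pos ⟨h1, h2⟩]
    apply congrArg
    apply Fin.ext
    exact hq.symm
  have hy_out : ∀ p : Fin n, p.1 < i.1 ∨ j.1 < p.1 → y p = x p := by
    intro p h
    simp only [hy, invop, hm, hM]
    rw [dif_neg (by omega)]
  have hprv_out : (prv i).1 < i.1 ∨ j.1 < (prv i).1 := by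
    by_cases h0 : i.1 = 0
    · rw [prv_val_zero i h0]; omega
    · rw [prv_val_pos i h0]; omega
  -- the four special values
  have hYpi : y (prv i) = x (prv i) := hy_out _ hprv_out
  have hYi : y i = x j := hy_in i j le_rfl hijv.le (by omega)
  have hYj : y j = x i := hy_in j i hijv.le le_rfl (by omega)
  have hYnj : y (nxt j) = x (nxt j) := by
    apply hy_out
    by_cases hj1 : j.1 + 1 = n
    · rw [nxt_val_last j hj1]
      have : i.1 ≠ 0 := fun h => hnot ⟨h, by omega⟩
      omega
    · rw [nxt_val_lt j (by omega)]; omega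
  -- index sets
  set T : Finset (Fin n) := Finset.univ.filter (fun k : Fin n => i.1 ≤ k.1 ∧ k.1 < j.1) with hT
  have hmemT : ∀ k : Fin n, k ∈ T ↔ (i.1 ≤ k.1 ∧ k.1 < j.1) := by
    intro k; simp [hT]
  have hpij : prv i ≠ j := fun h => by rw [h] at hprv_out; omega
  have hpiT : prv i ∉ T := by rw [hmemT]; omega
  have hjT : j ∉ T := by rw [hmemT]; omega
  have hpiS : prv i ∉ insert j T := by simp [hpij, hpiT]
  set F : Fin n → ℝ := fun k => dist (x k) (x (nxt k)) with hF
  set G : Fin n → ℝ := fun k => dist (y k) (y (nxt k)) with hG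
  have hsum : fitness x - fitness y = ∑ k : Fin n, (F k - G k) := by
    rw [Finset.sum_sub_distrib]; rfl
  have hS : ∑ k : Fin n, (F k - G k) = ∑ k ∈ insert (prv i) (insert j T), (F k - G k) := by
    refine (Finset.sum_subset (Finset.subset_univ _) ?_).symm
    intro k _ hk
    simp only [Finset.mem_insert, not_or] at hk
    obtain ⟨hk1, hk2, hk3⟩ := hk
    rw [hmemT] at hk3
    have hk2' : k.1 ≠ j.1 := fun h => hk2 (Fin.ext h)
    have hout : k.1 < i.1 ∨ j.1 < k.1 := by omega
    have h1 : y k = x k := hy_out _ hout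
    have h2 : y (nxt k) = x (nxt k) := by
      apply hy_out
      by_cases hkn : k.1 + 1 = n
      · rw [nxt_val_last k hkn]
        have hi0 : i.1 ≠ 0 := by
          intro h0
          exact hk1 (Fin.ext (by rw [prv_val_zero i h0]; omega))
        omega
      · rw [nxt_val_lt k (by omega)]
        have : k.1 + 1 ≠ i.1 := by
          intro h0
          have hi0 : i.1 ≠ 0 := by omega
          exact hk1 (Fin.ext (by rw [prv_val_pos i hi0]; omega))
        omega
    simp only [hF, hG, h1, h2, sub_self]
  have hTzero : ∑ k ∈ T, (F k - G k) = 0 := by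
    rw [Finset.sum_sub_distrib, sub_eq_zero]
    symm
    refine Finset.sum_nbij' (rmap i j) (rmap i j) ?_ ?_ ?_ ?_ ?_
    · intro k hk; rw [hmemT] at hk; rw [hmemT, rmap_val hk]; omega
    · intro k hk; rw [hmemT] at hk; rw [hmemT, rmap_val hk]; omega
    · intro k hk
      rw [hmemT] at hk
      have h2 : i.1 ≤ (rmap i j k).1 ∧ (rmap i j k).1 < j.1 := by rw [rmap_val hk]; omega
      apply Fin.ext
      rw [rmap_val h2, rmap_val hk]
      omega
    · intro k hk
      rw [hmemT] at hk
      have h2 : i.1 ≤ (rmap i j k).1 ∧ (rmap i j k).1 < j.1 := by rw [rmap_val hk]; omega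
      apply Fin.ext
      rw [rmap_val h2, rmap_val hk]
      omega
    · intro k hk
      rw [hmemT] at hk
      have hrv : (rmap i j k).1 = i.1 + j.1 - 1 - k.1 := rmap_val hk
      have hnxtM : (nxt (rmap i j k)).1 = i.1 + j.1 - k.1 := by
        rw [nxt_val_lt _ (by rw [hrv]; omega), hrv]; omega
      have e1 : y k = x (nxt (rmap i j k)) :=
        hy_in _ _ (by omega) (by omega) hnxtM
      have e3 : nxt k = (⟨k.1 + 1, by omega⟩ : Fin n) := Fin.ext (nxt_val_lt k (by omega))
      have e2 : y (nxt k) = x (rmap i j k) := by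
        rw [e3]
        exact hy_in _ _ (by show i.1 ≤ k.1 + 1; omega) (by show k.1 + 1 ≤ j.1; omega)
          (by rw [hrv]; show i.1 + j.1 - 1 - k.1 = i.1 + j.1 - (k.1 + 1); omega)
      simp only [hF, hG, e1, e2]
      exact dist_comm _ _
  rw [hsum, hS, Finset.sum_insert hpiS, Finset.sum_insert hjT, hTzero]
  have eF1 : F (prv i) = dist (x (prv i)) (x i) := by rw [hF]; simp only [nxt_prv]
  have eG1 : G (prv i) = dist (x (prv i)) (x j) := by
    rw [hG]; simp only [nxt_prv, hYpi, hYi]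
  have eG2 : G j = dist (x i) (x (nxt j)) := by rw [hG]; simp only [hYj, hYnj]
  rw [eF1, eG1, eG2]
  show _ = dist (x (prv i)) (x i) + dist (x j) (x (nxt j)) - _ - _
  ring

/-- removing a pair of intersecting edges by an inversion improves
the fitness by more than `2·d_min·(1 - cos ε)/cos ε` on an angle-bounded
instance. -/
theorem stmt8 (n : ℕ) (x : Fin n → Plane) (hinj : Function.Injective x)
    (hcol : noThreeCollinear (Set.range x))
    (ε : ℝ) (hε : 0 < ε) (hang : angleBounded ε (Set.range x))
    (dmin : ℝ) (hdmin : IsLeast (pairDists (Set.range x)) dmin)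
    (i j : Fin n) (hij : i < j)
    (hne : Sym2.mk (x (prv i)) (x i) ≠ Sym2.mk (x j) (x (nxt j)))
    (hcross : segsCross (x (prv i)) (x i) (x j) (x (nxt j))) :
    fitness x - fitness (invop i j x)
      > 2 * dmin * (1 - Real.cos ε) / Real.cos ε := by
  have hjn := j.2
  have hijv : i.1 < j.1 := hij
  have hn2 : 2 ≤ n := by omega
  have hnot : ¬(i.1 = 0 ∧ j.1 = n - 1) := by
    rintro ⟨h0, h1⟩
    apply hne
    have e1 : prv i = j := Fin.ext (by rw [prv_val_zero i h0]; omega)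
    have e2 : nxt j = i := Fin.ext (by rw [nxt_val_last j (by omega)]; omega)
    rw [e1, e2]
  -- index distinctness
  have hpii : (prv i).1 ≠ i.1 := by
    by_cases h0 : i.1 = 0
    · rw [prv_val_zero i h0]; omega
    · rw [prv_val_pos i h0]; omega
  have hpij : (prv i).1 ≠ j.1 := by
    by_cases h0 : i.1 = 0
    · rw [prv_val_zero i h0]; intro h; exact hnot ⟨h0, by omega⟩
    · rw [prv_val_pos i h0]; omega
  have hjnj : j.1 ≠ (nxt j).1 := by
    by_cases h1 : j.1 + 1 = n
    · rw [nxt_val_last j h1]; omega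
    · rw [nxt_val_lt j (by omega)]; omega
  have hinj' : i.1 ≠ (nxt j).1 := by
    by_cases h1 : j.1 + 1 = n
    · rw [nxt_val_last j h1]; intro h; exact hnot ⟨h.symm ▸ h, by omega⟩
    · rw [nxt_val_lt j (by omega)]; omega
  have hab : x (prv i) ≠ x i := fun h => hpii (congrArg Fin.val (hinj h))
  have hac : x (prv i) ≠ x j := fun h => hpij (congrArg Fin.val (hinj h))
  have hbc : x i ≠ x j := fun h => (by omega : i.1 ≠ j.1) (congrArg Fin.val (hinj h))
  have hcd : x j ≠ x (nxt j) := fun h => hjnj (congrArg Fin.val (hinj h))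
  have hbd : x i ≠ x (nxt j) := fun h => hinj' (congrArg Fin.val (hinj h))
  have mema : x (prv i) ∈ Set.range x := ⟨_, rfl⟩
  have memb : x i ∈ Set.range x := ⟨_, rfl⟩
  have memc : x j ∈ Set.range x := ⟨_, rfl⟩
  have memd : x (nxt j) ∈ Set.range x := ⟨_, rfl⟩
  have had : x (prv i) ≠ x (nxt j) := by
    intro h
    rw [← h] at hcross
    exact hcol _ mema _ memb _ memc hab hac hbc (collinear_of_cross_shared hcross)
  -- angle bounds
  have h1 := hang _ memb _ mema _ memc hab.symm hbc hac
  have h2 := hang _ memd _ memc _ mema hcd.symm (Ne.symm had) (Ne.symm hac)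
  have h3 := hang _ mema _ memb _ memd hab (Ne.symm had).symm hbd
  have h4 := hang _ memc _ memd _ memb hcd (Ne.symm hbc) hbd.symm
  have hεπ : ε < Real.pi / 2 := by
    have := EuclideanGeometry.angle_nonneg (x i) (x (prv i)) (x j)
    linarith [h1.1, h1.2]
  have hm1 : dmin ≤ dist (x (prv i)) (x j) :=
    hdmin.2 ⟨_, mema, _, memc, hac, rfl⟩
  have hm2 : dmin ≤ dist (x i) (x (nxt j)) :=
    hdmin.2 ⟨_, memb, _, memd, hbd, rfl⟩
  have hgain := cross_gain hab hcd hac hbd hcross h1.1 h2.1 h3.1 h4.1 hε hεπ hm1 hm2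
  rw [fitness_diff x i j hij hnot]
  linarith
end
end

section
/- Let ε ∈ (0, π/2) and let θ₁, θ₂ be angles with ε ≤ θ₁, θ₂ and θ₁ + θ₂ < π. Then (sin θ₁ + sin θ₂)/sin(θ₁ + θ₂) ≥ 2 sin ε / sin(2ε) = 1/cos ε. Consequently, in any nondegenerate triangle with vertices s, u, p whose interior angles at s and at u are each at least ε, one has d(u,p) + d(s,p) ≥ d(s,u)/cos ε > d(s,u). -/
noncomputable section
open Real EuclideanGeometry MeasureTheory
open scoped Classical ENNReal

lemma trig_aux (ε θ₁ θ₂ : ℝ) (hε0 : 0 < ε) (hε : ε < Real.pi / 2)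
    (h1 : ε ≤ θ₁) (h2 : ε ≤ θ₂) (hsum : θ₁ + θ₂ < Real.pi) :
    1 / Real.cos ε ≤ (Real.sin θ₁ + Real.sin θ₂) / Real.sin (θ₁ + θ₂) := by
  have hπ := Real.pi_pos
  set S := (θ₁ + θ₂) / 2 with hS
  set D := (θ₁ - θ₂) / 2 with hD
  have hSge : ε ≤ S := by simp only [hS]; linarith
  have hSlt : S < Real.pi / 2 := by simp only [hS]; linarith
  have hsinS : 0 < Real.sin S := Real.sin_pos_of_pos_of_lt_pi (lt_of_lt_of_le hε0 hSge)
    (by linarith)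
  have hcosS : 0 < Real.cos S := Real.cos_pos_of_mem_Ioo ⟨by linarith, hSlt⟩
  have hcosε : 0 < Real.cos ε := Real.cos_pos_of_mem_Ioo ⟨by linarith, hε⟩
  have habs : |D| + ε ≤ S := by
    have : |D| ≤ S - ε := abs_le.2 ⟨by simp only [hS, hD]; linarith, by simp only [hS, hD]; linarith⟩
    linarith
  have habs0 : (0:ℝ) ≤ |D| := abs_nonneg _
  have hkey : Real.cos S ≤ Real.cos D * Real.cos ε := by
    have h1 : Real.cos S ≤ Real.cos (|D| + ε) :=
      Real.cos_le_cos_of_nonneg_of_le_pi (by positivity) (by linarith) habs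
    have h2 : Real.cos (|D| + ε) = Real.cos |D| * Real.cos ε - Real.sin |D| * Real.sin ε :=
      Real.cos_add _ _
    have h3 : 0 ≤ Real.sin |D| := Real.sin_nonneg_of_nonneg_of_le_pi habs0 (by linarith)
    have h4 : 0 ≤ Real.sin ε := Real.sin_nonneg_of_nonneg_of_le_pi hε0.le (by linarith)
    have h5 : Real.cos |D| = Real.cos D := Real.cos_abs D
    nlinarith
  have hnum : Real.sin θ₁ + Real.sin θ₂ = 2 * Real.sin S * Real.cos D := by
    have hθ1 : θ₁ = S + D := by simp only [hS, hD]; ring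
    have hθ2 : θ₂ = S - D := by simp only [hS, hD]; ring
    rw [hθ1, hθ2, Real.sin_add, Real.sin_sub]; ring
  have hden : Real.sin (θ₁ + θ₂) = 2 * Real.sin S * Real.cos S := by
    have : θ₁ + θ₂ = 2 * S := by simp only [hS]; ring
    rw [this, Real.sin_two_mul]
  rw [hnum, hden, div_le_div_iff₀ hcosε (by positivity)]
  nlinarith

/-- the trigonometric estimate
`(sin θ₁ + sin θ₂)/sin(θ₁+θ₂) ≥ 2 sin ε / sin 2ε = 1/cos ε`, and its consequence
for nondegenerate triangles whose angles at `s` and `u` are at least `ε`. -/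
theorem stmt9 (ε θ₁ θ₂ : ℝ) (hε0 : 0 < ε) (hε : ε < Real.pi / 2)
    (h1 : ε ≤ θ₁) (h2 : ε ≤ θ₂) (hsum : θ₁ + θ₂ < Real.pi) :
    ((Real.sin θ₁ + Real.sin θ₂) / Real.sin (θ₁ + θ₂)
        ≥ 2 * Real.sin ε / Real.sin (2 * ε) ∧
      2 * Real.sin ε / Real.sin (2 * ε) = 1 / Real.cos ε) ∧
    (∀ s u p : Plane, ¬ Collinear ℝ ({s, u, p} : Set Plane) →
      ε ≤ ∠ u s p → ε ≤ ∠ s u p →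
      dist u p + dist s p ≥ dist s u / Real.cos ε ∧
        dist s u / Real.cos ε > dist s u) := by
  have hπ := Real.pi_pos
  have hcosε : 0 < Real.cos ε := Real.cos_pos_of_mem_Ioo ⟨by linarith, hε⟩
  have hcosε1 : Real.cos ε < 1 := by
    have := Real.cos_lt_cos_of_nonneg_of_le_pi le_rfl (by linarith) hε0
    simpa using this
  have hsε : Real.sin ε ≠ 0 :=
    (Real.sin_pos_of_pos_of_lt_pi hε0 (by linarith)).ne'
  have heq : 2 * Real.sin ε / Real.sin (2 * ε) = 1 / Real.cos ε := by
    rw [Real.sin_two_mul]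
    field_simp
  constructor
  · exact ⟨heq ▸ trig_aux ε θ₁ θ₂ hε0 hε h1 h2 hsum, heq⟩
  · intro s u p hcol hA hB
    have hcol' : ¬ Collinear ℝ ({s, p, u} : Set Plane) := by
      rwa [Set.pair_comm p u]
    have hcolu : ¬ Collinear ℝ ({u, s, p} : Set Plane) := by
      rwa [Set.insert_comm] at hcol
    -- distinctness
    have hsu : s ≠ u := by
      rintro rfl
      exact hcol ((collinear_pair ℝ s p).subset (by intro z hz; simp at hz ⊢; tauto))
    have hsp : s ≠ p := by
      rintro rfl
      exact hcol ((collinear_pair ℝ s u).subset (by intro z hz; simp at hz ⊢; tauto))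
    have hup : u ≠ p := by
      rintro rfl
      exact hcol ((collinear_pair ℝ s u).subset (by intro z hz; simp at hz ⊢; tauto))
    set A := ∠ u s p with hAdef
    set B := ∠ s u p with hBdef
    set C := ∠ s p u with hCdef
    have hsinC : 0 < Real.sin C := EuclideanGeometry.sin_pos_of_not_collinear hcol'
    have hCpos : 0 < C := EuclideanGeometry.angle_pos_of_not_collinear hcol'
    -- angle sum
    have hsum3 : A + B + C = Real.pi := by
      have := EuclideanGeometry.angle_add_angle_add_angle_eq_pi (p₁ := p) (p₂ := s) u
        hsp
      rw [EuclideanGeometry.angle_comm p s u, EuclideanGeometry.angle_comm u p s] at this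
      linarith [this]
    -- distances
    have hdsu : 0 < dist s u := dist_pos.2 hsu
    have hdsp : 0 < dist s p := dist_pos.2 hsp
    have hdup : 0 < dist u p := dist_pos.2 hup
    -- law of sines via Gram determinant
    set x : Plane := u -ᵥ s with hx
    set y : Plane := p -ᵥ s with hy
    have hGram : ∀ a b : Plane,
        (inner (𝕜 := ℝ) (-a) (-a)) * (inner (𝕜 := ℝ) (b - a) (b - a))
          - (inner (𝕜 := ℝ) (-a) (b - a)) * (inner (𝕜 := ℝ) (-a) (b - a))
        = (inner (𝕜 := ℝ) a a) * (inner (𝕜 := ℝ) b b)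
          - (inner (𝕜 := ℝ) a b) * (inner (𝕜 := ℝ) a b) := by
      intro a b
      simp only [inner_sub_left, inner_sub_right, inner_neg_left, inner_neg_right,
        real_inner_comm b a]
      ring
    set G : ℝ := (inner (𝕜 := ℝ) x x) * (inner (𝕜 := ℝ) y y)
      - (inner (𝕜 := ℝ) x y) * (inner (𝕜 := ℝ) x y) with hG
    have hA1 : Real.sin A * (dist s u * dist s p) = Real.sqrt G := by
      have := InnerProductGeometry.sin_angle_mul_norm_mul_norm x y
      rw [hAdef, EuclideanGeometry.angle, show InnerProductGeometry.angle (u -ᵥ s) (p -ᵥ s)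
        = InnerProductGeometry.angle x y from rfl,
        dist_comm s u, dist_comm s p, dist_eq_norm_vsub Plane u s, dist_eq_norm_vsub Plane p s]
      exact this
    have hdxy : dist u p = ‖x - y‖ := by
      rw [dist_eq_norm_vsub Plane, ← vsub_sub_vsub_cancel_right u p s, ← hx, ← hy]
    have hB1 : Real.sin B * (dist s u * dist u p) = Real.sqrt G := by
      have h := InnerProductGeometry.sin_angle_mul_norm_mul_norm (-x) (y - x)
      rw [hGram x y, ← hG, norm_neg, norm_sub_rev] at h
      have hang : B = InnerProductGeometry.angle (-x) (y - x) := by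
        rw [hBdef, EuclideanGeometry.angle,
          show s -ᵥ u = -x by rw [hx, neg_vsub_eq_vsub_rev],
          show p -ᵥ u = y - x by rw [hx, hy, vsub_sub_vsub_cancel_right]]
      have hd1 : dist s u = ‖x‖ := by rw [dist_comm, dist_eq_norm_vsub Plane, ← hx]
      rw [hang, hd1, hdxy]
      exact h
    have hC1 : Real.sin C * (dist s p * dist u p) = Real.sqrt G := by
      have h := InnerProductGeometry.sin_angle_mul_norm_mul_norm (-y) (x - y)
      have hGsym : (inner (𝕜 := ℝ) y y) * (inner (𝕜 := ℝ) x x)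
          - (inner (𝕜 := ℝ) y x) * (inner (𝕜 := ℝ) y x) = G := by
        rw [hG, real_inner_comm y x]; ring
      rw [hGram y x, hGsym, norm_neg] at h
      have hang : C = InnerProductGeometry.angle (-y) (x - y) := by
        rw [hCdef, EuclideanGeometry.angle,
          show s -ᵥ p = -y by rw [hy, neg_vsub_eq_vsub_rev],
          show u -ᵥ p = x - y by rw [hx, hy, vsub_sub_vsub_cancel_right]]
      have hd1 : dist s p = ‖y‖ := by rw [dist_comm, dist_eq_norm_vsub Plane, ← hy]
      rw [hang, hd1, hdxy]
      exact h
    -- cancel to get the two sine relations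
    have hArel : Real.sin A * dist s u = Real.sin C * dist u p := by
      have h := hA1.trans hC1.symm
      exact mul_right_cancel₀ hdsp.ne' (show (Real.sin A * dist s u) * dist s p
        = (Real.sin C * dist u p) * dist s p by linear_combination h)
    have hBrel : Real.sin B * dist s u = Real.sin C * dist s p := by
      have h := hB1.trans hC1.symm
      exact mul_right_cancel₀ hdup.ne' (show (Real.sin B * dist s u) * dist u p
        = (Real.sin C * dist s p) * dist u p by linear_combination h)
    have hsinCeq : Real.sin C = Real.sin (A + B) := by
      rw [show A + B = Real.pi - C by linarith, Real.sin_pi_sub]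
    have hABlt : A + B < Real.pi := by linarith
    have hratio : 1 / Real.cos ε ≤ (Real.sin A + Real.sin B) / Real.sin (A + B) :=
      trig_aux ε A B hε0 hε hA hB hABlt
    rw [← hsinCeq] at hratio
    have hmain : dist u p + dist s p = dist s u * ((Real.sin A + Real.sin B) / Real.sin C) := by
      rw [eq_comm, mul_div_assoc' , div_eq_iff hsinC.ne']
      nlinarith [hArel, hBrel]
    constructor
    · rw [ge_iff_le, div_eq_mul_one_div, hmain]
      exact mul_le_mul_of_nonneg_left hratio hdsu.le
    · rw [gt_iff_lt, lt_div_iff₀ hcosε]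
      have := mul_lt_mul_of_pos_left hcosε1 hdsu
      simpa using this
end
end
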